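/- Let t_1, t_2, … be real numbers and in ℝ[[z]] set s(z) := 1 + t_1 z + t_2 z^2 + ⋯. Then the following identity of formal power series holds: (z/(1 + z(1+z)(t_1 + t_2 z + t_3 z^2 + ⋯)))^{(−1)} + 1 = ((z+1)/z) · ((z/(1 − z + (z/s(z))^{(−1)}))^{(−1)}), where ^{(−1)} denotes compositional inverse of formal power series, and on the right-hand side the inner inverse (z/s(z))^{(−1)} is first formed, then the series z/(1 − z + (z/s(z))^{(−1)}) is inverted, and the result (which has zero constant term) is divided by z and multiplied by z + 1. -/

import Mathlib

open PowerSeries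

/-- Composition `f(g)` of formal power series; this gives the usual composition
whenever `g` has zero constant term (then `coeff n (g^m) = 0` for `m > n`). -/
noncomputable def psComp (f g : PowerSeries ℝ) : PowerSeries ℝ :=
  PowerSeries.mk fun n =>
    ∑ m ∈ Finset.range (n + 1), (PowerSeries.coeff m f) * (PowerSeries.coeff n (g ^ m))

/-- `s(z) = 1 + t₁ z + t₂ z² + ⋯`. -/
noncomputable def seriesS (t : ℕ → ℝ) : PowerSeries ℝ :=
  PowerSeries.mk fun n => if n = 0 then 1 else t n


lemma sum_antidiag_eq (n : ℕ) (h : ℕ × ℕ → ℝ) (h0 : ∀ p : ℕ × ℕ, n < p.1 + p.2 → h p = 0) :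
    ∑ m ∈ Finset.range (n+1), ∑ p ∈ Finset.HasAntidiagonal.antidiagonal m, h p
      = ∑ p ∈ Finset.range (n+1) ×ˢ Finset.range (n+1), h p := by
  rw [← Finset.sum_biUnion]
  · apply Finset.sum_subset
    · intro p hp
      rw [Finset.mem_biUnion] at hp
      obtain ⟨m, hm, hpm⟩ := hp
      rw [Finset.HasAntidiagonal.mem_antidiagonal] at hpm
      rw [Finset.mem_range] at hm
      simp only [Finset.mem_product, Finset.mem_range]
      omega
    · intro p _ hp
      apply h0
      by_contra hc
      push_neg at hc
      exact hp (Finset.mem_biUnion.2 ⟨p.1 + p.2, Finset.mem_range.2 (by omega),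
        Finset.HasAntidiagonal.mem_antidiagonal.2 rfl⟩)
  · intro m₁ _ m₂ _ hne
    apply Finset.disjoint_left.2
    intro p hp1 hp2
    rw [Finset.HasAntidiagonal.mem_antidiagonal] at hp1 hp2
    exact hne (hp1 ▸ hp2)


lemma coeff_psComp (f g : PowerSeries ℝ) (n : ℕ) :
    coeff n (psComp f g) =
      ∑ m ∈ Finset.range (n + 1), (coeff m f) * (coeff n (g ^ m)) := by
  simp [psComp, coeff_mk]

lemma coeff_pow_eq_zero' {g : PowerSeries ℝ} (hg : constantCoeff g = 0)
    {n m : ℕ} (h : n < m) : coeff n (g ^ m) = 0 := by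
  have hdvd : (X : PowerSeries ℝ) ^ m ∣ g ^ m :=
    pow_dvd_pow_of_dvd (X_dvd_iff.2 hg) m
  exact (X_pow_dvd_iff.1 hdvd) n h

lemma psComp_mul (f₁ f₂ g : PowerSeries ℝ) (hg : constantCoeff g = 0) :
    psComp (f₁ * f₂) g = psComp f₁ g * psComp f₂ g := by
  ext n
  rw [coeff_mul, coeff_psComp]
  have key := sum_antidiag_eq n
    (fun p => coeff p.1 f₁ * coeff p.2 f₂ * coeff n (g ^ (p.1 + p.2)))
    (fun p hp => by simp [coeff_pow_eq_zero' hg hp])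
  calc ∑ m ∈ Finset.range (n + 1), coeff m (f₁ * f₂) * coeff n (g ^ m)
      = ∑ m ∈ Finset.range (n + 1), ∑ p ∈ Finset.HasAntidiagonal.antidiagonal m,
          coeff p.1 f₁ * coeff p.2 f₂ * coeff n (g ^ (p.1 + p.2)) := by
        refine Finset.sum_congr rfl fun m hm => ?_
        rw [coeff_mul, Finset.sum_mul]
        refine Finset.sum_congr rfl fun p hp => ?_
        rw [Finset.HasAntidiagonal.mem_antidiagonal] at hp
        rw [hp]
    _ = ∑ p ∈ Finset.range (n + 1) ×ˢ Finset.range (n + 1),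
          coeff p.1 f₁ * coeff p.2 f₂ * coeff n (g ^ (p.1 + p.2)) := key
    _ = ∑ i ∈ Finset.range (n + 1), ∑ j ∈ Finset.range (n + 1),
          coeff i f₁ * coeff j f₂ * coeff n (g ^ (i + j)) := by
        rw [Finset.sum_product]
    _ = ∑ i ∈ Finset.range (n + 1), ∑ j ∈ Finset.range (n + 1),
          coeff i f₁ * coeff j f₂ *
            ∑ p ∈ Finset.HasAntidiagonal.antidiagonal n, coeff p.1 (g ^ i) * coeff p.2 (g ^ j) := by
        refine Finset.sum_congr rfl fun i _ => Finset.sum_congr rfl fun j _ => ?_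
        rw [← coeff_mul, ← pow_add]
    _ = ∑ i ∈ Finset.range (n + 1), ∑ j ∈ Finset.range (n + 1),
          ∑ p ∈ Finset.HasAntidiagonal.antidiagonal n,
            (coeff i f₁ * coeff p.1 (g ^ i)) * (coeff j f₂ * coeff p.2 (g ^ j)) := by
        refine Finset.sum_congr rfl fun i _ => Finset.sum_congr rfl fun j _ => ?_
        rw [Finset.mul_sum]
        exact Finset.sum_congr rfl fun p _ => by ring
    _ = ∑ p ∈ Finset.HasAntidiagonal.antidiagonal n, ∑ i ∈ Finset.range (n + 1),
          ∑ j ∈ Finset.range (n + 1),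
            (coeff i f₁ * coeff p.1 (g ^ i)) * (coeff j f₂ * coeff p.2 (g ^ j)) := by
        rw [show (∑ i ∈ Finset.range (n + 1), ∑ j ∈ Finset.range (n + 1),
            ∑ p ∈ Finset.HasAntidiagonal.antidiagonal n,
            (coeff i f₁ * coeff p.1 (g ^ i)) * (coeff j f₂ * coeff p.2 (g ^ j)))
          = ∑ i ∈ Finset.range (n + 1), ∑ p ∈ Finset.HasAntidiagonal.antidiagonal n,
            ∑ j ∈ Finset.range (n + 1),
            (coeff i f₁ * coeff p.1 (g ^ i)) * (coeff j f₂ * coeff p.2 (g ^ j))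
          from Finset.sum_congr rfl fun i _ => Finset.sum_comm]
        exact Finset.sum_comm
    _ = ∑ p ∈ Finset.HasAntidiagonal.antidiagonal n, coeff p.1 (psComp f₁ g) * coeff p.2 (psComp f₂ g) := by
        refine Finset.sum_congr rfl fun p hp => ?_
        rw [Finset.HasAntidiagonal.mem_antidiagonal] at hp
        have h1 : coeff p.1 (psComp f₁ g)
            = ∑ i ∈ Finset.range (n + 1), coeff i f₁ * coeff p.1 (g ^ i) := by
          rw [coeff_psComp]
          apply Finset.sum_subset
          · intro i hi; rw [Finset.mem_range] at hi ⊢; omega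
          · intro i _ hi
            rw [Finset.mem_range, not_lt] at hi
            rw [coeff_pow_eq_zero' hg (by omega), mul_zero]
        have h2 : coeff p.2 (psComp f₂ g)
            = ∑ j ∈ Finset.range (n + 1), coeff j f₂ * coeff p.2 (g ^ j) := by
          rw [coeff_psComp]
          apply Finset.sum_subset
          · intro j hj; rw [Finset.mem_range] at hj ⊢; omega
          · intro j _ hj
            rw [Finset.mem_range, not_lt] at hj
            rw [coeff_pow_eq_zero' hg (by omega), mul_zero]
        rw [h1, h2, Finset.sum_mul_sum]

lemma psComp_zero (g : PowerSeries ℝ) : psComp 0 g = 0 := by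
  ext n; simp [coeff_psComp]

lemma psComp_add (f₁ f₂ g : PowerSeries ℝ) :
    psComp (f₁ + f₂) g = psComp f₁ g + psComp f₂ g := by
  ext n
  simp [coeff_psComp, add_mul, Finset.sum_add_distrib]

lemma psComp_sum {α : Type*} (s : Finset α) (f : α → PowerSeries ℝ) (g : PowerSeries ℝ) :
    psComp (∑ i ∈ s, f i) g = ∑ i ∈ s, psComp (f i) g := by
  classical
  induction s using Finset.induction_on with
  | empty => simp [psComp_zero]
  | insert a s h ih => rw [Finset.sum_insert h, Finset.sum_insert h, psComp_add, ih]

lemma psComp_one (g : PowerSeries ℝ) : psComp 1 g = 1 := by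
  ext n
  rw [coeff_psComp]
  rw [Finset.sum_eq_single 0]
  · simp
  · intro m hm hm0
    simp [coeff_one, hm0]
  · simp

lemma psComp_pow (f g : PowerSeries ℝ) (hg : constantCoeff g = 0) (m : ℕ) :
    psComp (f ^ m) g = (psComp f g) ^ m := by
  induction m with
  | zero => simp [psComp_one]
  | succ m ih => rw [pow_succ, pow_succ, psComp_mul _ _ _ hg, ih]

lemma psComp_C (a : ℝ) (g : PowerSeries ℝ) : psComp (C a) g = C a := by
  ext n
  rw [coeff_psComp]
  rw [Finset.sum_eq_single 0]
  · simp [coeff_C]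
  · intro m hm hm0
    simp [coeff_C, hm0]
  · simp

lemma constantCoeff_psComp (f g : PowerSeries ℝ) :
    constantCoeff (psComp f g) = constantCoeff f := by
  have := coeff_psComp f g 0
  simpa [coeff_zero_eq_constantCoeff] using this

lemma coeff_psComp_S {g : PowerSeries ℝ} (hg : constantCoeff g = 0)
    (f : PowerSeries ℝ) {n N : ℕ} (hnN : n < N) :
    coeff n (psComp f g)
      = coeff n (∑ m ∈ Finset.range N, C (coeff m f) * g ^ m) := by
  rw [coeff_psComp, map_sum]
  simp only [coeff_C_mul]
  apply Finset.sum_subset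
  · intro m hm; rw [Finset.mem_range] at hm ⊢; omega
  · intro m _ hm
    rw [Finset.mem_range, not_lt] at hm
    rw [coeff_pow_eq_zero' hg (by omega), mul_zero]

lemma psComp_assoc (f g h : PowerSeries ℝ)
    (hg : constantCoeff g = 0) (hh : constantCoeff h = 0) :
    psComp (psComp f g) h = psComp f (psComp g h) := by
  have hgh : constantCoeff (psComp g h) = 0 := by
    rw [constantCoeff_psComp]; exact hg
  ext n
  set N := n + 1 with hN
  have step1 : coeff n (psComp f (psComp g h))
      = coeff n (∑ m ∈ Finset.range N, C (coeff m f) * (psComp g h) ^ m) :=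
    coeff_psComp_S hgh f (by omega)
  have step2 : (∑ m ∈ Finset.range N, C (coeff m f) * (psComp g h) ^ m)
      = psComp (∑ m ∈ Finset.range N, C (coeff m f) * g ^ m) h := by
    rw [psComp_sum]
    refine Finset.sum_congr rfl fun m _ => ?_
    rw [psComp_mul _ _ _ hh, psComp_C, psComp_pow _ _ hh]
  rw [step1, step2, coeff_psComp, coeff_psComp]
  refine Finset.sum_congr rfl fun m hm => ?_
  rw [Finset.mem_range] at hm
  rw [← coeff_psComp_S hg f (by omega : m < N)]

lemma coeff_pow_self {F : PowerSeries ℝ} (hF : constantCoeff F = 0) (n : ℕ) :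
    coeff n (F ^ n) = (coeff 1 F) ^ n := by
  induction n with
  | zero => simp
  | succ n ih =>
    rw [pow_succ, coeff_mul]
    rw [Finset.sum_eq_single (n, 1)]
    · rw [ih, pow_succ]
    · rintro ⟨k, l⟩ hp hne
      rw [Finset.HasAntidiagonal.mem_antidiagonal] at hp
      rcases lt_trichotomy k n with hk | hk | hk
      · rw [coeff_pow_eq_zero' hF hk, zero_mul]
      · exact absurd (by simp [hk]; omega : (k, l) = (n, 1)) hne
      · have hl : l = 0 := by omega
        rw [hl, coeff_zero_eq_constantCoeff, hF, mul_zero]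
    · intro h
      exact absurd (Finset.HasAntidiagonal.mem_antidiagonal.2 (by omega)) h

lemma psComp_injective {F : PowerSeries ℝ} (hF0 : constantCoeff F = 0)
    (hF1 : coeff 1 F = 1) {f₁ f₂ : PowerSeries ℝ}
    (h : psComp f₁ F = psComp f₂ F) : f₁ = f₂ := by
  ext n
  induction n using Nat.strong_induction_on with
  | _ n ih =>
    have hc := congrArg (coeff n) h
    rw [coeff_psComp, coeff_psComp] at hc
    rcases n with _ | n
    · simpa using hc
    · have hsplit : ∀ f : PowerSeries ℝ,
          ∑ m ∈ Finset.range (n + 1 + 1), coeff m f * coeff (n+1) (F ^ m)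
            = (∑ m ∈ Finset.range (n + 1), coeff m f * coeff (n+1) (F ^ m))
              + coeff (n+1) f * coeff (n+1) (F ^ (n+1)) :=
        fun f => Finset.sum_range_succ _ _
      rw [hsplit f₁, hsplit f₂] at hc
      have heq : (∑ m ∈ Finset.range (n + 1), coeff m f₁ * coeff (n+1) (F ^ m))
          = ∑ m ∈ Finset.range (n + 1), coeff m f₂ * coeff (n+1) (F ^ m) := by
        refine Finset.sum_congr rfl fun m hm => ?_
        rw [Finset.mem_range] at hm
        rw [ih m (by omega)]
      rw [heq] at hc
      have h2 := add_left_cancel hc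
      rw [coeff_pow_self hF0, hF1, one_pow, mul_one, mul_one] at h2
      exact h2

lemma psComp_inv {u g : PowerSeries ℝ} (hg : constantCoeff g = 0)
    (hu : constantCoeff u ≠ 0) : psComp u⁻¹ g = (psComp u g)⁻¹ := by
  have hcc : constantCoeff (psComp u g) ≠ 0 := by
    rw [constantCoeff_psComp]; exact hu
  rw [PowerSeries.eq_inv_iff_mul_eq_one hcc, ← psComp_mul _ _ _ hg,
    PowerSeries.inv_mul_cancel u hu, psComp_one]

lemma psComp_sub (f₁ f₂ g : PowerSeries ℝ) :
    psComp (f₁ - f₂) g = psComp f₁ g - psComp f₂ g := by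
  ext n
  simp [coeff_psComp, sub_mul, Finset.sum_sub_distrib]

lemma psComp_X {g : PowerSeries ℝ} (hg : constantCoeff g = 0) : psComp X g = g := by
  ext n
  rw [coeff_psComp]
  rcases n with _ | n
  · simp [coeff_X, coeff_zero_eq_constantCoeff, hg]
  · rw [Finset.sum_eq_single 1]
    · simp [coeff_X]
    · intro m hm hm1
      simp [coeff_X, hm1]
    · intro h
      exact absurd (Finset.mem_range.2 (by omega)) h



/-- The key identity of formal power series:
`(z/(1 + z(1+z)(t₁ + t₂ z + ⋯)))^{(-1)} + 1
  = ((z+1)/z) · (z/(1 - z + (z/s(z))^{(-1)}))^{(-1)}`,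
where `s(z) = 1 + t₁ z + ⋯`.  Each compositional inverse `F^{(-1)}` of a series
`F = z + ⋯` is the unique series `G = z + ⋯` with `G(F(z)) = z`; here it is supplied
as a variable (`v₁`, `v₂`, `w`) together with its defining properties, and division of
`v₂` by `z` (legitimate since `v₂` has zero constant term) is expressed by shifting
coefficients. -/
theorem key_power_series_identity (t : ℕ → ℝ)
    (v₁ v₂ w : PowerSeries ℝ)
    -- v₁ = (z/s(z))^{(-1)}
    (hv₁0 : PowerSeries.constantCoeff v₁ = 0) (hv₁1 : PowerSeries.coeff 1 v₁ = 1)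
    (hv₁ : psComp v₁ (PowerSeries.X * (seriesS t)⁻¹) = PowerSeries.X)
    -- v₂ = (z/(1 - z + v₁))^{(-1)}
    (hv₂0 : PowerSeries.constantCoeff v₂ = 0) (hv₂1 : PowerSeries.coeff 1 v₂ = 1)
    (hv₂ : psComp v₂ (PowerSeries.X * (1 - PowerSeries.X + v₁)⁻¹) = PowerSeries.X)
    -- w = (z/(1 + z(1+z)(t₁ + t₂ z + ⋯)))^{(-1)}
    (hw0 : PowerSeries.constantCoeff w = 0) (hw1 : PowerSeries.coeff 1 w = 1)
    (hw : psComp w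
        (PowerSeries.X *
          (1 + PowerSeries.X * (1 + PowerSeries.X) * PowerSeries.mk fun n => t (n + 1))⁻¹)
      = PowerSeries.X) :
    w + 1 = (1 + PowerSeries.X) * PowerSeries.mk fun n => PowerSeries.coeff (n + 1) v₂ := by
  -- abbreviations
  set T : PowerSeries ℝ := PowerSeries.mk fun n => t (n + 1) with hT
  set s : PowerSeries ℝ := seriesS t with hs
  set g₁ : PowerSeries ℝ := X * s⁻¹ with hg₁
  set g₂ : PowerSeries ℝ := X * (1 - X + v₁)⁻¹ with hg₂
  set F : PowerSeries ℝ := X * (1 + X * (1 + X) * T)⁻¹ with hF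
  set D : PowerSeries ℝ := PowerSeries.mk fun n => PowerSeries.coeff (n + 1) v₂ with hD
  -- s = 1 + X * T
  have hsdef : s = 1 + X * T := by
    ext n
    rcases n with _ | n
    · simp [hs, seriesS, coeff_mk, hT, coeff_one, coeff_zero_eq_constantCoeff, map_add,
        constantCoeff_X]
    · simp [hs, seriesS, coeff_mk, hT, coeff_one, map_add, coeff_succ_X_mul]
  -- constant coefficients
  have hA0 : constantCoeff (X * (1 + X) * T) = 0 := by
    simp [map_mul, constantCoeff_X]
  have hq1 : constantCoeff (1 + X * (1 + X) * T) = 1 := by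
    simp [map_add, hA0]
  have hq1' : constantCoeff (1 + X * (1 + X) * T) ≠ 0 := by rw [hq1]; exact one_ne_zero
  have hs1 : constantCoeff s = 1 := by
    rw [hsdef]; simp [map_add, map_mul, constantCoeff_X]
  have hs1' : constantCoeff s ≠ 0 := by rw [hs1]; exact one_ne_zero
  have hp1 : constantCoeff (1 - X + v₁) = 1 := by
    simp [map_add, map_sub, constantCoeff_X, hv₁0]
  have hp1' : constantCoeff (1 - X + v₁) ≠ 0 := by rw [hp1]; exact one_ne_zero
  have hg₁0 : constantCoeff g₁ = 0 := by simp [hg₁, map_mul, constantCoeff_X]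
  have hg₂0 : constantCoeff g₂ = 0 := by simp [hg₂, map_mul, constantCoeff_X]
  have hF0 : constantCoeff F = 0 := by simp [hF, map_mul, constantCoeff_X]
  have hF1 : coeff 1 F = 1 := by
    rw [hF, show (1 : ℕ) = 0 + 1 from rfl, coeff_succ_X_mul, coeff_zero_eq_constantCoeff,
      constantCoeff_inv, hq1, inv_one]
  -- basic inverse facts
  have hss : s * s⁻¹ = 1 := PowerSeries.mul_inv_cancel s hs1'
  have hss' : s⁻¹ * s = 1 := PowerSeries.inv_mul_cancel s hs1'
  have hqq : (1 + X * (1 + X) * T)⁻¹ * (1 + X * (1 + X) * T) = 1 :=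
    PowerSeries.inv_mul_cancel _ hq1'
  have hFq : F * (1 + X * (1 + X) * T) = X := by
    rw [hF]; linear_combination (X : PowerSeries ℝ) * hqq
  -- step 1 : psComp g₂ g₁ = F
  have hcomp1 : psComp (1 - X + v₁) g₁ = 1 - g₁ + X := by
    rw [psComp_add, psComp_sub, psComp_one, psComp_X hg₁0, hv₁]
  have hpg1 : constantCoeff (1 - g₁ + X) = 1 := by
    simp [map_add, map_sub, constantCoeff_X, hg₁0]
  have hpg1' : constantCoeff (1 - g₁ + X) ≠ 0 := by rw [hpg1]; exact one_ne_zero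
  have hpgpg : (1 - g₁ + X)⁻¹ * (1 - g₁ + X) = 1 := PowerSeries.inv_mul_cancel _ hpg1'
  have hkey : s * (1 - g₁ + X) = 1 + X * (1 + X) * T := by
    rw [hg₁]; linear_combination (-(X : PowerSeries ℝ)) * hss + (1 + X) * hsdef
  have hcomp : psComp g₂ g₁ = F := by
    rw [hg₂, psComp_mul _ _ _ hg₁0, psComp_X hg₁0, psComp_inv hg₁0 hp1', hcomp1]
    -- goal : g₁ * (1 - g₁ + X)⁻¹ = F
    have hne : ((1 - g₁ + X) * (1 + X * (1 + X) * T)) ≠ 0 := by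
      intro hzero
      have := congrArg (constantCoeff) hzero
      rw [map_mul, hpg1, hq1] at this
      simpa using this
    apply mul_right_cancel₀ hne
    linear_combination (g₁ * (1 + X * (1 + X) * T)) * hpgpg + (1 + X * (1 + X) * T) * hg₁
      - (X * s⁻¹) * hkey + (X * (1 - g₁ + X)) * hss'
      - ((1 - g₁ + X) * (1 + X * (1 + X) * T)) * hF - (X * (1 - g₁ + X)) * hqq
  -- step 2 : psComp v₂ F = g₁
  have h2 : psComp v₂ F = g₁ := by
    rw [← hcomp, ← psComp_assoc v₂ g₂ g₁ hg₂0 hg₁0, hv₂, psComp_X hg₁0]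
  -- step 3
  have h1X' : constantCoeff (1 + X : PowerSeries ℝ) ≠ 0 := by
    simp [map_add, constantCoeff_X]
  have hcomp3 : psComp (X * (w + 1) * (1 + X)⁻¹) F = F * (X + 1) * (1 + F)⁻¹ := by
    rw [psComp_mul _ _ _ hF0, psComp_mul _ _ _ hF0, psComp_X hF0, psComp_add,
      psComp_one, hw, psComp_inv hF0 h1X', psComp_add, psComp_one, psComp_X hF0]
  have h1F1 : constantCoeff (1 + F) = 1 := by simp [map_add, hF0]
  have h1F' : constantCoeff (1 + F) ≠ 0 := by rw [h1F1]; exact one_ne_zero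
  have hpF : (1 + F)⁻¹ * (1 + F) = 1 := PowerSeries.inv_mul_cancel _ h1F'
  have honeF : (1 + F) * (1 + X * (1 + X) * T) = (1 + X) * s := by
    linear_combination hFq - (1 + X) * hsdef
  have hQne : (1 + X * (1 + X) * T : PowerSeries ℝ) ≠ 0 := by
    intro hzero
    have := congrArg (constantCoeff) hzero
    rw [hq1] at this
    simpa using this
  have hc : F * (X + 1) * s = X * (1 + F) := by
    apply mul_right_cancel₀ hQne
    linear_combination ((X + 1) * s) * hFq - X * honeF
  have hfinal : F * (X + 1) * (1 + F)⁻¹ = g₁ := by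
    have hne2 : ((1 + F) * s : PowerSeries ℝ) ≠ 0 := by
      intro hzero
      have := congrArg (constantCoeff) hzero
      rw [map_mul, h1F1, hs1] at this
      simpa using this
    apply mul_right_cancel₀ hne2
    linear_combination (F * (X + 1) * s) * hpF + hc - ((1 + F) * s) * hg₁
      - (X * (1 + F)) * hss'
  have hv2eq : v₂ = X * (w + 1) * (1 + X)⁻¹ :=
    psComp_injective hF0 hF1 (h2.trans (hcomp3.trans hfinal).symm)
  have hXD : X * D = v₂ := by
    ext n
    rcases n with _ | n
    · rw [coeff_zero_eq_constantCoeff, map_mul, constantCoeff_X, zero_mul, hv₂0]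
    · rw [coeff_succ_X_mul, hD, coeff_mk]
  have hxx : (1 + X : PowerSeries ℝ)⁻¹ * (1 + X) = 1 := PowerSeries.inv_mul_cancel _ h1X'
  have hmain : X * (w + 1) = X * ((1 + X) * D) := by
    have hstep : v₂ * (1 + X) = X * (w + 1) := by
      rw [hv2eq]; linear_combination (X * (w + 1)) * hxx
    calc X * (w + 1) = v₂ * (1 + X) := hstep.symm
      _ = (X * D) * (1 + X) := by rw [hXD]
      _ = X * ((1 + X) * D) := by ring
  exact mul_left_cancel₀ X_ne_zero hmain
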